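/- Let (X,f) be a dynamical system with the shadowing property. If there exists a minimal point that is not regularly recurrent, then (X,f) has positive topological entropy. -/

import Mathlib

open Set Function

variable {X : Type*}

/-- A `δ`-pseudo-orbit of `f`. -/
def IsPseudoOrbit [MetricSpace X] (f : X → X) (δ : ℝ) (x : ℕ → X) : Prop :=
  ∀ n : ℕ, dist (f (x n)) (x (n + 1)) < δ

/-- `z` ε-traces the sequence `x`. -/
def Traces [MetricSpace X] (f : X → X) (ε : ℝ) (z : X) (x : ℕ → X) : Prop :=
  ∀ n : ℕ, dist (f^[n] z) (x n) < ε

/-- The shadowing property. -/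
def HasShadowing [MetricSpace X] (f : X → X) : Prop :=
  ∀ ε > (0 : ℝ), ∃ δ > (0 : ℝ), ∀ x : ℕ → X, IsPseudoOrbit f δ x → ∃ z : X, Traces f ε z x

/-- The shadowing property of the restriction of `f` to an invariant set `S`. -/
def HasShadowingOn [MetricSpace X] (f : X → X) (S : Set X) : Prop :=
  ∀ ε > (0 : ℝ), ∃ δ > (0 : ℝ), ∀ x : ℕ → X, (∀ n, x n ∈ S) → IsPseudoOrbit f δ x →
    ∃ z ∈ S, Traces f ε z x

/-- Non-wandering point. -/
def NonWanderingPt [TopologicalSpace X] (f : X → X) (x : X) : Prop :=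
  ∀ U ∈ nhds x, ∃ k : ℕ, 1 ≤ k ∧ ∃ y ∈ U, f^[k] y ∈ U

/-- The (forward) orbit of a point. -/
def orbitSet (f : X → X) (x : X) : Set X := Set.range fun n : ℕ => f^[n] x

/-- Recurrent point. -/
def RecurrentPt [TopologicalSpace X] (f : X → X) (x : X) : Prop :=
  ∀ U ∈ nhds x, ∃ k : ℕ, 1 ≤ k ∧ f^[k] x ∈ U

/-- Minimal point: every point of the orbit closure has `x` in its own orbit closure,
i.e. the orbit closure of `x` is a minimal set. -/
def MinimalPt [TopologicalSpace X] (f : X → X) (x : X) : Prop :=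
  ∀ y ∈ closure (orbitSet f x), x ∈ closure (orbitSet f y)

/-- Regularly recurrent point. -/
def RegRecPt [TopologicalSpace X] (f : X → X) (x : X) : Prop :=
  ∀ U ∈ nhds x, ∃ k : ℕ, 1 ≤ k ∧ ∀ n : ℕ, f^[k * n] x ∈ U

/-- Equicontinuity of the family of iterates of `f`. -/
def EquicontinuousMap [MetricSpace X] (f : X → X) : Prop :=
  ∀ ε > (0 : ℝ), ∃ δ > (0 : ℝ), ∀ x y : X, dist x y < δ →
    ∀ n : ℕ, dist (f^[n] x) (f^[n] y) < ε

/-- `u` is a sensitive point of the subsystem on `S`. -/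
def SensitivePtOn [MetricSpace X] (f : X → X) (S : Set X) (u : X) : Prop :=
  ∃ δ > (0 : ℝ), ∀ U ∈ nhds u, ∃ n : ℕ, ∃ a ∈ U ∩ S, ∃ b ∈ U ∩ S,
    dist (f^[n] a) (f^[n] b) > δ

/-- `u` is a sensitive point of `(X,f)`. -/
def SensitivePt [MetricSpace X] (f : X → X) (u : X) : Prop :=
  ∃ δ > (0 : ℝ), ∀ U ∈ nhds u, ∃ n : ℕ, ∃ a ∈ U, ∃ b ∈ U,
    dist (f^[n] a) (f^[n] b) > δ

/-- Topological transitivity. -/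
def TopTransitive {Y : Type*} [TopologicalSpace Y] (g : Y → Y) : Prop :=
  ∀ U V : Set Y, IsOpen U → U.Nonempty → IsOpen V → V.Nonempty →
    ∃ n : ℕ, 1 ≤ n ∧ (g^[n] '' U ∩ V).Nonempty

/-- Weak mixing: the product system is transitive. -/
def WeaklyMixing [TopologicalSpace X] (f : X → X) : Prop :=
  TopTransitive (fun p : X × X => (f p.1, f p.2))

/-- Strong mixing. -/
def StronglyMixing {Y : Type*} [TopologicalSpace Y] (g : Y → Y) : Prop :=
  ∀ U V : Set Y, IsOpen U → U.Nonempty → IsOpen V → V.Nonempty →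
    ∃ N : ℕ, ∀ n ≥ N, (g^[n] '' U ∩ V).Nonempty

/-- The shift map on the full shift over `d` symbols. -/
def shiftMap (d : ℕ) : (ℕ → Fin d) → (ℕ → Fin d) := fun x n => x (n + 1)

/-- `π` is a factor map from the subsystem `(Y, f^[m])` onto the full shift on `d` symbols. -/
def FactorOntoShift [TopologicalSpace X] (f : X → X) (m : ℕ) (Y : Set X) (d : ℕ)
    (π : X → (ℕ → Fin d)) : Prop :=
  ContinuousOn π Y ∧ π '' Y = Set.univ ∧ ∀ y ∈ Y, π (f^[m] y) = shiftMap d (π y)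

set_option linter.unusedSectionVars false
set_option linter.unusedVariables false
set_option maxHeartbeats 1000000

namespace EntropyAux
open Filter



variable {X : Type*}

/-- A `δ`-chain of length `L` from `a` to `b`. -/
def PChain [MetricSpace X] (f : X → X) (δ : ℝ) (L : ℕ) (a b : X) : Prop :=
  ∃ c : ℕ → X, c 0 = a ∧ c L = b ∧ ∀ i < L, dist (f (c i)) (c (i + 1)) < δ

lemma pChain_refl [MetricSpace X] (f : X → X) (δ : ℝ) (a : X) : PChain f δ 0 a a :=
  ⟨fun _ => a, rfl, rfl, fun i hi => absurd hi (Nat.not_lt_zero i)⟩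

lemma PChain.concat [MetricSpace X] {f : X → X} {δ : ℝ} {L M : ℕ} {a b d : X}
    (h1 : PChain f δ L a b) (h2 : PChain f δ M b d) : PChain f δ (L + M) a d := by
  obtain ⟨c1, hc10, hc1L, hc1⟩ := h1
  obtain ⟨c2, hc20, hc2M, hc2⟩ := h2
  refine ⟨fun i => if i < L then c1 i else c2 (i - L), ?_, ?_, ?_⟩
  · by_cases h : 0 < L
    · simpa [h] using hc10
    · have hL : L = 0 := by omega
      simp only [h, if_false]
      subst hL
      simp only [Nat.sub_zero] at *
      rw [hc20, ← hc1L, hc10]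
  · have : ¬ (L + M < L) := by omega
    simp only [this, if_false]
    simpa using hc2M
  · intro i hi
    by_cases h1' : i + 1 < L
    · have h0 : i < L := by omega
      simp only [h0, h1', if_true]
      exact hc1 i h0
    · by_cases h0 : i < L
      · have hiL : i + 1 = L := by omega
        simp only [h0, h1', if_true, if_false]
        have : c2 (i + 1 - L) = c1 (i + 1) := by
          rw [hiL]; simp [hc20, ← hc1L]
        rw [this]
        exact hc1 i h0
      · simp only [h0, h1', if_false]
        have hi2 : i - L < M := by omega
        have : i + 1 - L = (i - L) + 1 := by omega
        rw [this]
        exact hc2 _ hi2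

lemma PChain.iterate [MetricSpace X] {f : X → X} {δ : ℝ} {L : ℕ} {a : X}
    (h : PChain f δ L a a) : ∀ k : ℕ, PChain f δ (k * L) a a := by
  intro k
  induction k with
  | zero => simpa using pChain_refl f δ a
  | succ n ih =>
      have := ih.concat h
      simpa [Nat.succ_mul] using this

lemma closure_image_subset [TopologicalSpace X] [CompactSpace X] [T2Space X]
    {h : X → X} (hh : Continuous h) (A : Set X) :
    closure (h '' A) ⊆ h '' closure A := by
  have hc : IsCompact (closure A) := isClosed_closure.isCompact
  exact closure_minimal (image_mono (f := h) subset_closure) (hc.image hh).isClosed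

lemma iInter_image_subset [MetricSpace X] [CompactSpace X] {h : X → X} (hh : Continuous h)
    {K : ℕ → Set X} (hmono : ∀ i, K (i + 1) ⊆ K i) (hcl : ∀ i, IsClosed (K i))
    (hne : ∀ i, (K i).Nonempty) :
    (⋂ i, h '' K i) ⊆ h '' ⋂ i, K i := by
  have hanti : ∀ {m n : ℕ}, m ≤ n → K n ⊆ K m := by
    intro m n hmn
    induction n with
    | zero =>
        have : m = 0 := by omega
        subst this; exact fun _ hx => hx
    | succ p ih =>
        rcases Nat.lt_or_ge m (p+1) with h' | h'
        · exact (hmono p).trans (ih (by omega))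
        · have : m = p + 1 := by omega
          subst this; exact fun _ hx => hx
  intro y hy
  have hy' : ∀ i, y ∈ h '' K i := fun i => mem_iInter.mp hy i
  choose z hz hhz using hy'
  obtain ⟨w, -, φ, hφ, hlim⟩ := isCompact_univ.tendsto_subseq (x := z) (fun n => mem_univ _)
  refine ⟨w, ?_, ?_⟩
  · rw [mem_iInter]
    intro m
    refine (hcl m).mem_of_tendsto hlim ?_
    filter_upwards [eventually_ge_atTop m] with i hi
    exact hanti (le_trans hi (hφ.le_apply)) (hz (φ i))
  · have h1 : Tendsto (fun i => h (z (φ i))) atTop (nhds (h w)) :=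
      ((hh.tendsto w).comp hlim)
    have h2 : (fun i => h (z (φ i))) = fun _ => y := by
      funext i; exact hhz (φ i)
    rw [h2] at h1
    exact tendsto_nhds_unique h1 tendsto_const_nhds




section Returns

variable [MetricSpace X] [CompactSpace X] {f : X → X} (hf : Continuous f) {x : X}

/-- Tail sets of the `f^[k]`-orbit. -/
private def C (f : X → X) (k : ℕ) (w : X) (N : ℕ) : Set X :=
  closure ((fun n : ℕ => f^[k * n] w) '' Set.Ici N)

private lemma C_closed (k : ℕ) (w : X) (N : ℕ) : IsClosed (C f k w N) := isClosed_closure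

private lemma C_nonempty (k : ℕ) (w : X) (N : ℕ) : (C f k w N).Nonempty :=
  ⟨f^[k * N] w, subset_closure ⟨N, le_refl N, rfl⟩⟩

private lemma C_antitone (k : ℕ) (w : X) (N : ℕ) : C f k w (N + 1) ⊆ C f k w N :=
  closure_mono (image_mono fun i hi => le_trans (Nat.le_succ N) hi)

private lemma C_anti (k : ℕ) (w : X) {M N : ℕ} (h : M ≤ N) : C f k w N ⊆ C f k w M :=
  closure_mono (image_mono fun i hi => le_trans h hi)

/-- The ω-limit-like set. -/
private def S (f : X → X) (k : ℕ) (w : X) : Set X := ⋂ N, C f k w N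

private lemma S_closed (k : ℕ) (w : X) : IsClosed (S f k w) :=
  isClosed_iInter fun N => C_closed k w N

private lemma S_nonempty (k : ℕ) (w : X) : (S f k w).Nonempty := by
  refine IsCompact.nonempty_iInter_of_sequence_nonempty_isCompact_isClosed
    (C f k w) (C_antitone k w) (C_nonempty k w) ?_ (C_closed k w)
  exact (C_closed k w 0).isCompact

include hf in
private lemma S_g_mem (k : ℕ) (w : X) : ∀ p ∈ S f k w, f^[k] p ∈ S f k w := by
  intro p hp
  rw [S, mem_iInter]
  intro N
  have hp' : p ∈ C f k w N := mem_iInter.mp hp N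
  have h1 : f^[k] p ∈ f^[k] '' C f k w N := mem_image_of_mem _ hp'
  have h2 : f^[k] '' C f k w N ⊆ closure (f^[k] '' ((fun n : ℕ => f^[k * n] w) '' Set.Ici N)) :=
    image_closure_subset_closure_image (hf.iterate k)
  have h3 : f^[k] '' ((fun n : ℕ => f^[k * n] w) '' Set.Ici N)
      ⊆ (fun n : ℕ => f^[k * n] w) '' Set.Ici N := by
    rintro _ ⟨_, ⟨n, hn, rfl⟩, rfl⟩
    refine ⟨n + 1, le_trans hn (Nat.le_succ n), ?_⟩
    simp only
    rw [← Function.iterate_add_apply]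
    congr 1
    ring
  exact closure_mono h3 (h2 h1)

include hf in
private lemma S_g_iter_mem (k : ℕ) (w : X) : ∀ j : ℕ, ∀ p ∈ S f k w, f^[k * j] p ∈ S f k w := by
  intro j
  induction j with
  | zero => intro p hp; simpa using hp
  | succ n ih =>
      intro p hp
      have h1 := S_g_mem hf k w _ (ih p hp)
      rw [← Function.iterate_add_apply] at h1
      have : k + k * n = k * (n + 1) := by ring
      rwa [this] at h1

private lemma S_sub_orbit (k : ℕ) (w : X) : S f k w ⊆ closure (orbitSet f w) := by
  refine (iInter_subset _ 0).trans (closure_mono ?_)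
  rintro _ ⟨n, -, rfl⟩
  exact ⟨k * n, rfl⟩

include hf in
private lemma orbit_S_sub (k : ℕ) {w p : X} (hp : p ∈ S f k w) :
    closure ((fun n : ℕ => f^[k * n] p) '' Set.Ici 0) ⊆ S f k w := by
  refine closure_minimal ?_ (S_closed k w)
  rintro _ ⟨n, -, rfl⟩
  exact S_g_iter_mem hf k w n p hp

include hf in
/-- `C x N ⊆ f^[j] '' C w' N` whenever `f^[j] w' = x`. -/
private lemma C_sub_image (k : ℕ) {w' : X} {j : ℕ} (hw' : f^[j] w' = x) (N : ℕ) :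
    C f k x N ⊆ f^[j] '' C f k w' N := by
  have h1 : (fun n : ℕ => f^[k * n] x) '' Set.Ici N
      ⊆ f^[j] '' ((fun n : ℕ => f^[k * n] w') '' Set.Ici N) := by
    rintro _ ⟨n, hn, rfl⟩
    refine ⟨f^[k * n] w', ⟨n, hn, rfl⟩, ?_⟩
    rw [← Function.iterate_add_apply, Nat.add_comm, Function.iterate_add_apply, hw']
  refine (closure_mono h1).trans ?_
  exact closure_image_subset (hf.iterate j) _

include hf in
/-- Key recurrence lemma. -/
lemma returns (hmin : MinimalPt f x) {k : ℕ} (hk : 1 ≤ k) {δ : ℝ} (hδ : 0 < δ) (N : ℕ) :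
    ∃ n, N ≤ n ∧ dist (f^[k * n] x) x < δ := by
  -- step 1 : pick w in S x
  obtain ⟨w, hw⟩ := S_nonempty (f := f) k x
  -- step 2 : x ∈ closure orbit w
  have hxw : x ∈ closure (orbitSet f w) := hmin w (S_sub_orbit k x hw)
  -- step 3 : pigeonhole over residues
  have horb : orbitSet f w ⊆ ⋃ j ∈ Finset.range k, range (fun n : ℕ => f^[k * n] (f^[j] w)) := by
    rintro _ ⟨i, rfl⟩
    refine mem_biUnion (Finset.mem_range.mpr (Nat.mod_lt i hk)) ⟨i / k, ?_⟩
    simp only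
    rw [← Function.iterate_add_apply]
    congr 1
    exact (Nat.div_add_mod i k).symm ▸ rfl
  have hclosed : IsClosed (⋃ j ∈ Finset.range k,
      closure (range (fun n : ℕ => f^[k * n] (f^[j] w)))) := by
    refine Set.Finite.isClosed_biUnion (Finset.finite_toSet _) fun j _ => isClosed_closure
  have hxU : x ∈ ⋃ j ∈ Finset.range k,
      closure (range (fun n : ℕ => f^[k * n] (f^[j] w))) := by
    refine closure_minimal (horb.trans ?_) hclosed hxw
    exact iUnion₂_mono fun j _ => subset_closure
  obtain ⟨j, hj, hxj⟩ := mem_iUnion₂.mp hxU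
  -- step 5 : x ∈ f^[j] '' S x
  have himg : x ∈ f^[j] '' S f k x := by
    have h1 : range (fun n : ℕ => f^[k * n] (f^[j] w))
        ⊆ f^[j] '' range (fun n : ℕ => f^[k * n] w) := by
      rintro _ ⟨n, rfl⟩
      refine ⟨f^[k * n] w, ⟨n, rfl⟩, ?_⟩
      rw [← Function.iterate_add_apply, Nat.add_comm, Function.iterate_add_apply]
    have h2 : closure (range (fun n : ℕ => f^[k * n] (f^[j] w)))
        ⊆ f^[j] '' closure (range (fun n : ℕ => f^[k * n] w)) :=
      (closure_mono h1).trans (closure_image_subset (hf.iterate j) _)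
    have h3 : closure (range (fun n : ℕ => f^[k * n] w)) ⊆ S f k x := by
      have : range (fun n : ℕ => f^[k * n] w) = (fun n : ℕ => f^[k * n] w) '' Set.Ici 0 := by
        ext p; constructor
        · rintro ⟨n, rfl⟩; exact ⟨n, Nat.zero_le n, rfl⟩
        · rintro ⟨n, -, rfl⟩; exact ⟨n, rfl⟩
      rw [this]
      exact orbit_S_sub hf k hw
    exact (h2.trans (image_mono h3)) hxj
  -- step 6 : S x ⊆ f^[j] '' S x
  have himgcopy := himg
  obtain ⟨w', hw'S, hw'j⟩ := himgcopy
  have hSsub : S f k x ⊆ f^[j] '' S f k x := by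
    intro y hy
    have h1 : y ∈ ⋂ N, f^[j] '' C f k w' N := by
      rw [mem_iInter]
      intro N
      exact C_sub_image hf k hw'j N (mem_iInter.mp hy N)
    have h2 : (⋂ N, f^[j] '' C f k w' N) ⊆ f^[j] '' ⋂ N, C f k w' N :=
      iInter_image_subset (hf.iterate j) (C_antitone k w') (C_closed k w') (C_nonempty k w')
    have h3 : (⋂ N, C f k w' N) ⊆ S f k x := by
      refine iInter_subset_of_subset 0 ?_
      refine closure_minimal ?_ (S_closed k x)
      rintro _ ⟨n, -, rfl⟩
      exact S_g_iter_mem hf k x n w' hw'S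
    exact image_mono h3 (h2 h1)
  -- step 7 : iterate
  have hiter : ∀ t : ℕ, S f k x ⊆ f^[j * t] '' S f k x := by
    intro t
    induction t with
    | zero => intro y hy; exact ⟨y, hy, rfl⟩
    | succ n ih =>
        intro y hy
        obtain ⟨z, hz, hzy⟩ := hSsub hy
        obtain ⟨u, hu, huz⟩ := ih hz
        refine ⟨u, hu, ?_⟩
        rw [← hzy, ← huz, ← Function.iterate_add_apply]
        congr 1
        ring
  -- step 8 : x ∈ S x
  have hxS : x ∈ S f k x := by
    obtain ⟨z, hz, hzx⟩ := himg
    obtain ⟨u, hu, huz⟩ := hiter (k - 1) hz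
    have : f^[j] (f^[j * (k - 1)] u) = x := by rw [huz, hzx]
    rw [← Function.iterate_add_apply] at this
    have hjk : j + j * (k - 1) = k * j := by
      cases k with
      | zero => omega
      | succ m =>
          simp only [Nat.succ_sub_one]
          ring
    rw [hjk] at this
    have hxmem : f^[k * j] u ∈ S f k x := S_g_iter_mem hf k x j u hu
    rwa [this] at hxmem
  -- step 9 : conclude
  have hx' : x ∈ C f k x N := mem_iInter.mp hxS N
  rw [C, Metric.mem_closure_iff] at hx'
  obtain ⟨p, ⟨n, hn, rfl⟩, hp⟩ := hx' δ hδ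
  exact ⟨n, hn, by rwa [dist_comm] at hp⟩

end Returns


section B
variable [MetricSpace X] [CompactSpace X] {f : X → X} (hf : Continuous f) {x : X}


include hf in
lemma exists_far_point (hmin : MinimalPt f x) {U : Set X} (hxU : x ∈ U) {r : ℝ}
    (hball : Metric.ball x r ⊆ U)
    (hesc : ∀ k, 1 ≤ k → ∃ n, f^[k * n] x ∉ U) :
    ∃ v : X, r ≤ dist v x ∧ ∀ m, 1 ≤ m → ∀ δ : ℝ, 0 < δ →
      (∃ a, 1 ≤ a ∧ PChain f δ (m * a) x v) ∧ (∃ b, 1 ≤ b ∧ PChain f δ (m * b) v x) := by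
  -- escape points along factorials
  have hK : ∀ k : ℕ, 1 ≤ (k + 1).factorial := fun k => Nat.one_le_iff_ne_zero.mpr
    (Nat.factorial_ne_zero _)
  choose nn hnn using fun k : ℕ => hesc ((k + 1).factorial) (hK k)
  set z : ℕ → X := fun k => f^[(k + 1).factorial * nn k] x with hz
  obtain ⟨v, -, φ, hφ, hlim⟩ := isCompact_univ.tendsto_subseq (x := z) (fun n => mem_univ _)
  have hzr : ∀ k, r ≤ dist (z k) x := by
    intro k
    by_contra hlt
    exact hnn k (hball (by simpa [Metric.mem_ball] using not_le.mp hlt))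
  refine ⟨v, ?_, ?_⟩
  · have h1 : Tendsto (fun i => dist (z (φ i)) x) atTop (nhds (dist v x)) :=
      (Continuous.dist continuous_id continuous_const).continuousAt.tendsto.comp hlim
    exact ge_of_tendsto h1 (Eventually.of_forall fun i => hzr (φ i))
  · intro m hm δ hδ
    -- continuity of f at v
    obtain ⟨δ', hδ', hcont⟩ := Metric.continuousAt_iff.mp (hf.continuousAt (x := v))
      (δ / 2) (by linarith)
    set ε' : ℝ := min δ' (δ / 2) with hε'
    have hε'pos : 0 < ε' := lt_min hδ' (by linarith)
    -- pick a good index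
    have hev : ∀ᶠ i in atTop, dist (z (φ i)) v < ε' ∧ m ≤ φ i + 1 := by
      refine (Metric.tendsto_nhds.mp hlim ε' hε'pos).and ?_
      filter_upwards [eventually_ge_atTop m] with i hi
      exact le_trans (le_trans hi hφ.le_apply) (Nat.le_succ _)
    obtain ⟨i, hiv, him⟩ := hev.exists
    set M : ℕ := (φ i + 1).factorial with hM
    set n : ℕ := nn (φ i) with hn
    have hzin : z (φ i) = f^[M * n] x := rfl
    have hMpos : 1 ≤ M := hK (φ i)
    have hmdvd : m ∣ M := Nat.dvd_factorial (by omega) him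
    have hnpos : 1 ≤ n := by
      by_contra hn0
      have : n = 0 := by omega
      apply hnn (φ i)
      rw [← hn, this]
      simpa using hxU
    have hdiv : 1 ≤ M / m := Nat.one_le_div_iff (by omega) |>.mpr (Nat.le_of_dvd (by omega) hmdvd)
    have hMm : m * (M / m) = M := Nat.mul_div_cancel' hmdvd
    constructor
    · -- chain x → v of length M * n
      refine ⟨M / m * n, Nat.mul_pos hdiv hnpos, ?_⟩
      have hlen : m * (M / m * n) = M * n := by rw [← Nat.mul_assoc, hMm]
      rw [hlen]
      refine ⟨fun t => if t = M * n then v else f^[t] x, ?_, ?_, ?_⟩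
      · have hMn : 0 < M * n := Nat.mul_pos (by omega) (by omega)
        show (if (0:ℕ) = M * n then v else f^[0] x) = x
        rw [if_neg (show ¬ ((0:ℕ) = M * n) by omega)]
        simp
      · simp
      · intro t ht
        by_cases h1 : t + 1 = M * n
        · have h0 : ¬ (t = M * n) := by omega
          simp only [h0, if_false, h1, if_true]
          have e1 : f (f^[t] x) = z (φ i) := by
            rw [hzin, ← h1, Function.iterate_succ_apply']
          rw [e1]
          calc dist (z (φ i)) v < ε' := hiv
          _ ≤ δ / 2 := min_le_right _ _
          _ < δ := by linarith
        · have h0 : ¬ (t = M * n) := by omega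
          simp only [h0, if_false, h1, if_false]
          rw [← Function.iterate_succ_apply' f t x]
          simpa using hδ
    · -- chain v → x
      obtain ⟨N', hN', hret⟩ := returns hf hmin hMpos (half_pos hδ) (n + 1)
      set L : ℕ := M * N' - M * n with hL
      have hLeq : M * n + L = M * N' := by
        have : M * n ≤ M * N' := Nat.mul_le_mul_left M (by omega)
        omega
      have hLpos : 1 ≤ L := by
        have h3 : M * (n + 1) = M * n + M := by ring
        have h4 : M * (n + 1) ≤ M * N' := Nat.mul_le_mul_left M (by omega)
        omega
      refine ⟨M / m * (N' - n), Nat.mul_pos hdiv (by omega), ?_⟩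
      have hlen : m * (M / m * (N' - n)) = L := by
        rw [← Nat.mul_assoc, hMm, hL, Nat.mul_sub]
      rw [hlen]
      have hfz : ∀ t : ℕ, f (f^[t] x) = f^[t + 1] x := by
        intro t
        rw [Function.iterate_succ_apply']
      have hfzv : dist (f (z (φ i))) (f v) < δ / 2 := hcont (lt_of_lt_of_le hiv (min_le_left _ _))
      refine ⟨fun t => if t = 0 then v else if t = L then x else f^[M * n + t] x, by simp, ?_, ?_⟩
      · have hL0 : ¬ (L = 0) := by omega
        simp [hL0]
      · intro t ht
        by_cases ht0 : t = 0
        · subst ht0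
          show dist (f (if (0:ℕ) = 0 then v else if (0:ℕ) = L then x else f^[M * n + 0] x))
              (if (1:ℕ) = 0 then v else if (1:ℕ) = L then x else f^[M * n + 1] x) < δ
          rw [if_pos rfl, if_neg (show ¬ ((1:ℕ) = 0) by omega)]
          by_cases hL1 : (1:ℕ) = L
          · rw [if_pos hL1]
            have e2 : f (z (φ i)) = f^[M * N'] x := by
              rw [hzin, hfz]
              congr 1
              omega
            calc dist (f v) x ≤ dist (f v) (f (z (φ i))) + dist (f (z (φ i))) x :=
                  dist_triangle _ _ _
            _ < δ / 2 + δ / 2 := by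
                refine add_lt_add ?_ ?_
                · rw [dist_comm]; exact hfzv
                · rw [e2]; exact hret
            _ = δ := by ring
          · rw [if_neg hL1]
            have e2 : f^[M * n + 1] x = f (z (φ i)) := by rw [hzin, hfz]
            rw [e2, dist_comm]
            calc dist (f (z (φ i))) (f v) < δ / 2 := hfzv
            _ < δ := by linarith
        · by_cases ht1 : t + 1 = L
          · have htL : ¬ (t = L) := by omega
            have h10 : ¬ (t + 1 = 0) := by omega
            show dist (f (if t = 0 then v else if t = L then x else f^[M * n + t] x))
                (if t + 1 = 0 then v else if t + 1 = L then x else f^[M * n + (t + 1)] x) < δ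
            rw [if_neg ht0, if_neg htL, if_neg h10, if_pos ht1]
            have e2 : f (f^[M * n + t] x) = f^[M * N'] x := by
              rw [hfz]
              congr 1
              omega
            rw [e2]
            calc dist (f^[M * N'] x) x < δ / 2 := hret
            _ < δ := by linarith
          · have htL : ¬ (t = L) := by omega
            have h10 : ¬ (t + 1 = 0) := by omega
            show dist (f (if t = 0 then v else if t = L then x else f^[M * n + t] x))
                (if t + 1 = 0 then v else if t + 1 = L then x else f^[M * n + (t + 1)] x) < δ
            rw [if_neg ht0, if_neg htL, if_neg h10, if_neg ht1]
            rw [hfz]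
            have e3 : M * n + t + 1 = M * n + (t + 1) := by ring
            rw [e3]
            simpa using hδ
  end B



section CD
variable [MetricSpace X] {f : X → X} {x v : X}

lemma PChain.cast {δ : ℝ} {L L' : ℕ} {a b : X} (h : PChain f δ L a b) (e : L = L') :
    PChain f δ L' a b := e ▸ h

lemma common_length
    (hxv : ∀ m, 1 ≤ m → ∀ δ : ℝ, 0 < δ →
      (∃ a, 1 ≤ a ∧ PChain f δ (m * a) x v) ∧ (∃ b, 1 ≤ b ∧ PChain f δ (m * b) v x))
    {δ : ℝ} (hδ : 0 < δ) :
    ∃ L, 1 ≤ L ∧ PChain f δ L x x ∧ PChain f δ L x v ∧ PChain f δ L v x ∧ PChain f δ L v v := by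
  obtain ⟨⟨a, ha, hca⟩, ⟨b, hb, hcb⟩⟩ := hxv 1 le_rfl δ hδ
  set P : ℕ := 1 * a + 1 * b with hP
  have hPpos : 1 ≤ P := by omega
  have hPxx : PChain f δ P x x := hca.concat hcb
  have hPvv : PChain f δ P v v := (hcb.concat hca).cast (by omega)
  obtain ⟨⟨a2, ha2, hca2⟩, ⟨b2, hb2, hcb2⟩⟩ := hxv P hPpos δ hδ
  refine ⟨P * a2 + P * b2, by have := Nat.mul_pos hPpos ha2; omega, ?_, ?_, ?_, ?_⟩
  · exact hca2.concat hcb2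
  · exact (hca2.concat ((hPvv.iterate b2).cast (Nat.mul_comm b2 P))).cast rfl
  · exact (hcb2.concat ((hPxx.iterate a2).cast (Nat.mul_comm a2 P))).cast (by omega)
  · exact (hcb2.concat hca2).cast (by omega)

end CD

section E
variable [MetricSpace X] [CompactSpace X] {f : X → X}

open Dynamics ENNReal EReal

lemma entropy_pos_of_chains (hsh : HasShadowing f) {x v : X} {r : ℝ} (hr : 0 < r)
    (hd : r ≤ dist v x)
    (hch : ∀ δ : ℝ, 0 < δ → ∃ L, 1 ≤ L ∧ PChain f δ L x x ∧ PChain f δ L x v ∧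
      PChain f δ L v x ∧ PChain f δ L v v) :
    0 < Dynamics.coverEntropy f Set.univ := by
  classical
  set ε : ℝ := r / 8 with hε
  obtain ⟨δ, hδ, htr⟩ := hsh ε (by positivity)
  obtain ⟨L, hL, cxx, cxv, cvx, cvv⟩ := hch δ hδ
  set pin : Bool → X := fun b => if b then v else x with hpin
  have hch4 : ∀ pq : Bool × Bool, PChain f δ L (pin pq.1) (pin pq.2) := by
    rintro ⟨p, q⟩
    cases p <;> cases q <;> simpa [hpin]
  choose cf hcf0 hcfL hcfj using hch4
  -- the pseudo-orbits
  set po : (ℕ → Bool) → ℕ → X := fun q t => cf (q (t / L), q (t / L + 1)) (t % L) with hpo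
  have hLpos : 0 < L := hL
  have key1 : ∀ q i, po q (L * i) = pin (q i) := by
    intro q i
    have h1 : L * i / L = i := Nat.mul_div_cancel_left i hLpos
    have h2 : L * i % L = 0 := Nat.mul_mod_right L i
    simp only [hpo, h1, h2]
    exact hcf0 _
  have key2 : ∀ q, IsPseudoOrbit f δ (po q) := by
    intro q t
    set i : ℕ := t / L with hi
    set s : ℕ := t % L with hs
    have hsL : s < L := Nat.mod_lt t hLpos
    have ht : t = s + L * i := by rw [hs, hi, Nat.add_comm]; exact (Nat.div_add_mod t L).symm ▸ by omega
    have hpot : po q t = cf (q i, q (i + 1)) s := rfl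
    by_cases hc : s + 1 < L
    · have e1 : (t + 1) / L = i := by
        rw [ht, show s + L * i + 1 = (s + 1) + L * i by ring, Nat.add_mul_div_left _ _ hLpos,
          Nat.div_eq_of_lt hc]
        omega
      have e2 : (t + 1) % L = s + 1 := by
        rw [ht, show s + L * i + 1 = (s + 1) + L * i by ring, Nat.add_mul_mod_self_left,
          Nat.mod_eq_of_lt hc]
      have : po q (t + 1) = cf (q i, q (i + 1)) (s + 1) := by simp only [hpo, e1, e2]
      rw [hpot, this]
      exact hcfj _ s hsL
    · have hsL1 : s + 1 = L := by omega
      have e1 : t + 1 = L * (i + 1) := by rw [ht]; ring_nf; omega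
      have : po q (t + 1) = pin (q (i + 1)) := by rw [e1]; exact key1 q (i + 1)
      rw [hpot, this, ← hcfL (q i, q (i + 1)), ← hsL1]
      exact hcfj _ s hsL
  -- traced points
  choose z hz using fun q : ℕ → Bool => htr (po q) (key2 q)
  -- separation
  have hsep : ∀ q q' : ℕ → Bool, ∀ i, q i ≠ q' i →
      r / 2 < dist (f^[L * i] (z q)) (f^[L * i] (z q')) := by
    intro q q' i hi
    have h1 : dist (f^[L * i] (z q)) (po q (L * i)) < ε := hz q (L * i)
    have h2 : dist (f^[L * i] (z q')) (po q' (L * i)) < ε := hz q' (L * i)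
    rw [key1] at h1 h2
    have h3 : r ≤ dist (pin (q i)) (pin (q' i)) := by
      have hdist : r ≤ dist x v := by rw [dist_comm]; exact hd
      rw [hpin]
      cases hq : q i <;> cases hq' : q' i
      · exact absurd (hq.trans hq'.symm) hi
      · simpa using hdist
      · simpa using hd
      · exact absurd (hq.trans hq'.symm) hi
    have := dist_triangle4 (pin (q i)) (f^[L * i] (z q)) (f^[L * i] (z q')) (pin (q' i))
    rw [dist_comm (pin (q i)) (f^[L * i] (z q))] at this
    linarith
  -- the entourage
  set U : Set (X × X) := {p : X × X | dist p.1 p.2 < r / 4} with hU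
  have hUuni : U ∈ uniformity X := Metric.dist_mem_uniformity (by positivity)
  -- words
  set ext : ∀ m : ℕ, (Fin m → Bool) → (ℕ → Bool) :=
    fun m q i => if h : i < m then q ⟨i, h⟩ else false with hext
  have hextne : ∀ m : ℕ, ∀ q q' : Fin m → Bool, ∀ i : Fin m, q i ≠ q' i →
      ext m q (i : ℕ) ≠ ext m q' (i : ℕ) := by
    intro m q q' i hi
    simpa [hext, i.isLt] using hi
  have hembinj : ∀ m : ℕ, Function.Injective (fun q : Fin m → Bool => z (ext m q)) := by
    intro m q q' he
    by_contra hne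
    obtain ⟨i, hi⟩ := Function.ne_iff.mp hne
    have h3 := hsep (ext m q) (ext m q') i (hextne m q q' i hi)
    simp only at he
    rw [he] at h3
    simp at h3
    linarith
  have hnet : ∀ m : ℕ, ((2 : ℕ∞) ^ m) ≤ netMaxcard f Set.univ U (L * m) := by
    intro m
    set s : Finset X := Finset.univ.image (fun q : Fin m → Bool => z (ext m q)) with hsdef
    have hcard : s.card = 2 ^ m := by
      rw [hsdef, Finset.card_image_of_injective _ (hembinj m)]
      simp
    have hnet2 : IsDynNetIn f Set.univ U (L * m) ↑s := by
      constructor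
      · exact Set.subset_univ _
      · intro p1 hp1 p2 hp2 hne
        simp only [hsdef, Finset.coe_image, Finset.coe_univ, Set.image_univ,
          Set.mem_range] at hp1 hp2
        obtain ⟨q, rfl⟩ := hp1
        obtain ⟨q', rfl⟩ := hp2
        have hqq : q ≠ q' := fun e => hne (by rw [e])
        obtain ⟨i, hi⟩ := Function.ne_iff.mp hqq
        simp only [Function.onFun]
        refine Set.disjoint_left.mpr fun w hw1 hw2 => ?_
        rw [Dynamics.mem_ball_dynEntourage] at hw1 hw2
        have hk : L * (i : ℕ) < L * m := by
          have h5 := i.isLt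
          calc L * (i : ℕ) < L * ((i : ℕ) + 1) := by
                have : L * (i:ℕ) + L = L * ((i:ℕ)+1) := by ring
                omega
          _ ≤ L * m := Nat.mul_le_mul_left L (by omega)
        have h1 := hw1 (L * i) hk
        have h2 := hw2 (L * i) hk
        rw [UniformSpace.ball, Set.mem_preimage] at h1 h2
        have hd1 : dist (f^[L * i] (z (ext m q))) (f^[L * i] w) < r / 4 := h1
        have hd2 : dist (f^[L * i] (z (ext m q'))) (f^[L * i] w) < r / 4 := h2
        have h3 := hsep (ext m q) (ext m q') i (hextne m q q' i hi)
        have h4 := dist_triangle (f^[L * i] (z (ext m q))) (f^[L * i] w)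
          (f^[L * i] (z (ext m q')))
        rw [dist_comm (f^[L * i] w) (f^[L * i] (z (ext m q')))] at h4
        linarith
    have hfin := hnet2.card_le_netMaxcard
    calc ((2 : ℕ∞) ^ m) = ((2 ^ m : ℕ) : ℕ∞) := by push_cast; ring
    _ = (s.card : ℕ∞) := by rw [hcard]
    _ ≤ netMaxcard f Set.univ U (L * m) := hfin
  -- the entropy bound
  set c : EReal := ((Real.log 2 / L : ℝ) : EReal) with hc
  have hcpos : (0 : EReal) < c := by
    rw [hc]
    have : (0 : ℝ) < Real.log 2 / L := by
      apply div_pos (Real.log_pos (by norm_num))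
      exact_mod_cast hLpos
    exact_mod_cast this
  have hlog2 : ENNReal.log (2 : ℝ≥0∞) = ((Real.log 2 : ℝ) : EReal) := by
    rw [show (2 : ℝ≥0∞) = ENNReal.ofReal 2 by norm_num,
      ENNReal.log_ofReal_of_pos (by norm_num)]
  have hfreq : ∃ᶠ n in atTop,
      c ≤ ENNReal.log (netMaxcard f Set.univ U n) / (n : EReal) := by
    rw [Filter.frequently_atTop]
    intro N
    set m : ℕ := max N 1 with hm
    have hm1 : 1 ≤ m := le_max_right N 1
    refine ⟨L * m, le_trans (le_max_left N 1) (Nat.le_mul_of_pos_left m hLpos), ?_⟩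
    have hb0 : (0 : EReal) < ((L * m : ℕ) : EReal) := by
      have : 0 < L * m := Nat.mul_pos hLpos hm1
      exact_mod_cast this
    rw [EReal.le_div_iff_mul_le hb0 (EReal.natCast_ne_top _)]
    have hL1 : c * ((L * m : ℕ) : EReal) = ((Real.log 2 * m : ℝ) : EReal) := by
      have e1 : ((L * m : ℕ) : EReal) = ((L * m : ℝ) : EReal) := by norm_cast
      rw [hc, e1, ← EReal.coe_mul]
      congr 1
      have hLne : (L : ℝ) ≠ 0 := by positivity
      field_simp
    rw [hL1]
    have hR : ((m : ℕ) : EReal) * ENNReal.log (2 : ℝ≥0∞)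
        ≤ ENNReal.log (netMaxcard f Set.univ U (L * m)) := by
      have h6 : ((2 : ℕ∞) ^ m : ℕ∞) ≤ netMaxcard f Set.univ U (L * m) := hnet m
      have h7 := ENNReal.log_monotone (ENat.toENNReal_mono h6)
      rw [show (((2 : ℕ∞) ^ m : ℕ∞) : ℝ≥0∞) = ((2 : ℝ≥0∞) ^ m) by push_cast; ring] at h7
      rwa [ENNReal.log_pow] at h7
    refine le_trans ?_ hR
    have hm' : ((m : ℕ) : EReal) = ((m : ℝ) : EReal) := by norm_cast
    rw [hlog2, hm', ← EReal.coe_mul]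
    exact_mod_cast le_of_eq (by ring)
  have hbound : c ≤ netEntropyEntourage f Set.univ U := by
    rw [netEntropyEntourage]
    exact Filter.le_limsup_of_frequently_le hfreq
      (Filter.isBoundedUnder_of ⟨⊤, fun _ => le_top⟩)
  exact lt_of_lt_of_le (lt_of_lt_of_le hcpos hbound)
    (netEntropyEntourage_le_coverEntropy f Set.univ hUuni)

end E

end EntropyAux

theorem minimal_nonregrec_implies_positive_entropy [MetricSpace X] [CompactSpace X]
    (f : X → X) (hf : Continuous f) (hsh : HasShadowing f)
    (h : ∃ x : X, MinimalPt f x ∧ ¬ RegRecPt f x) :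
    0 < Dynamics.coverEntropy f Set.univ := by
  obtain ⟨x, hmin, hnrr⟩ := h
  rw [RegRecPt] at hnrr
  push_neg at hnrr
  obtain ⟨U, hUnhds, hU⟩ := hnrr
  obtain ⟨r, hr, hball⟩ := Metric.mem_nhds_iff.mp hUnhds
  have hxU : x ∈ U := mem_of_mem_nhds hUnhds
  obtain ⟨v, hvd, hvch⟩ := EntropyAux.exists_far_point hf hmin hxU hball hU
  exact EntropyAux.entropy_pos_of_chains hsh hr hvd
    (fun δ hδ => EntropyAux.common_length hvch hδ)
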